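/- Let σ ∈ Av_n(312). For each descent i of σ, let j_i be the minimal index such that σ(k) ≥ σ(i) for all k ∈ [j_i, i], and define Ψ(σ∘(i i+1)) = σ∘(i+1 i ⋯ j_i+1 j_i). Then Ψ is a bijection from cov_{S_n}(σ) = {σ∘(i i+1) : i a descent of σ} onto cov_{Av_n(312)}(σ), the set of elements covered by σ in the subposet Av_n(312) of S_n. -/

import Mathlib

noncomputable section

/-- A permutation is `312`-avoiding if no three positions realize the pattern `312`. -/
def Av312 {n : ℕ} (σ : Equiv.Perm (Fin n)) : Prop :=
  ¬ ∃ i1 i2 i3 : Fin n, i1 < i2 ∧ i2 < i3 ∧ σ i3 < σ i1 ∧ σ i2 < σ i3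

/-- `τ` is covered by `σ` in the right weak order on `S_n`:
`τ = σ ∘ (i i+1)` for a descent `i` of `σ`. -/
def wCov {n : ℕ} (σ τ : Equiv.Perm (Fin n)) : Prop :=
  ∃ i : ℕ, ∃ h : i + 1 < n,
    σ ⟨i + 1, h⟩ < σ ⟨i, Nat.lt_of_succ_lt h⟩ ∧
    τ = σ * Equiv.swap ⟨i, Nat.lt_of_succ_lt h⟩ ⟨i + 1, h⟩

/-- The right weak order on `S_n`: reflexive-transitive closure of the covering relations. -/
def weakLe {n : ℕ} (τ σ : Equiv.Perm (Fin n)) : Prop :=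
  Relation.ReflTransGen (fun a b => wCov a b) σ τ

/-- The cycle `(i+1 i ⋯ j+1 j)`, sending `j ↦ i+1` and `x ↦ x - 1` for `j < x ≤ i + 1`. -/
def cyc (n i j : ℕ) (h : i + 1 < n) : Equiv.Perm (Fin n) :=
  ((List.range (i + 1 - j)).map fun k =>
    Equiv.swap (⟨i - k, by omega⟩ : Fin n) ⟨i - k + 1, by omega⟩).prod

/-- `j_i`: the minimal index `j` such that `σ(k) ≥ σ(i)` for all `k ∈ [j, i]`. -/
def jmin {n : ℕ} (σ : Equiv.Perm (Fin n)) (i : ℕ) (h : i + 1 < n) : ℕ :=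
  sInf {j : ℕ | ∀ k, j ≤ k → ∀ hk : k ≤ i,
    σ ⟨i, Nat.lt_of_succ_lt h⟩ ≤ σ ⟨k, by omega⟩}

/-- The map `Ψ`, sending `σ ∘ (i i+1)` (for a descent `i` of `σ`) to
`σ ∘ (i+1 i ⋯ j_i+1 j_i)`. -/
def psi {n : ℕ} (σ τ : Equiv.Perm (Fin n)) : Equiv.Perm (Fin n) :=
  let a := sInf {a : ℕ | ∃ h : a + 1 < n,
    τ = σ * Equiv.swap ⟨a, Nat.lt_of_succ_lt h⟩ ⟨a + 1, h⟩}
  if h : a + 1 < n then σ * cyc n a (jmin σ a h) h else τ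

/-- The set of elements covered by `σ` in the subposet `Av_n(312)` of `S_n`. -/
def covAv {n : ℕ} (σ : Equiv.Perm (Fin n)) : Set (Equiv.Perm (Fin n)) :=
  {τ | Av312 τ ∧ weakLe τ σ ∧ τ ≠ σ ∧
    ∀ ρ, Av312 ρ → weakLe τ ρ → weakLe ρ σ → ρ = τ ∨ ρ = σ}


theorem Equiv.Perm.inv_apply_self {α : Type*} (f : Equiv.Perm α) (x : α) : f⁻¹ (f x) = x :=
  Equiv.symm_apply_apply f x

theorem Equiv.Perm.apply_inv_self {α : Type*} (f : Equiv.Perm α) (x : α) : f (f⁻¹ x) = x :=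
  Equiv.apply_symm_apply f x

namespace T13

variable {n : ℕ}

def invF (π : Equiv.Perm (Fin n)) : Finset (Fin n × Fin n) :=
  Finset.univ.filter fun p => p.1 < p.2 ∧ π⁻¹ p.2 < π⁻¹ p.1

lemma mem_invF {π : Equiv.Perm (Fin n)} {p : Fin n × Fin n} :
    p ∈ invF π ↔ p.1 < p.2 ∧ π⁻¹ p.2 < π⁻¹ p.1 := by
  simp [invF]

lemma mem_invF' {π : Equiv.Perm (Fin n)} {a b : Fin n} :
    (a, b) ∈ invF π ↔ a < b ∧ π⁻¹ b < π⁻¹ a := by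
  simp [invF]

lemma swap_lt_iff {i : ℕ} (h : i + 1 < n) (p q : Fin n) :
    Equiv.swap (⟨i, Nat.lt_of_succ_lt h⟩ : Fin n) ⟨i+1, h⟩ p <
      Equiv.swap (⟨i, Nat.lt_of_succ_lt h⟩ : Fin n) ⟨i+1, h⟩ q ↔
      ((p < q ∧ ¬(p.val = i ∧ q.val = i + 1)) ∨ (p.val = i + 1 ∧ q.val = i)) := by
  simp only [Equiv.swap_apply_def]
  split_ifs <;> simp only [Fin.lt_def, Fin.ext_iff, Fin.val_mk] at * <;> omega

lemma inv_mul_swap_apply {i : ℕ} (h : i + 1 < n) (σ : Equiv.Perm (Fin n)) (x : Fin n) :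
    (σ * Equiv.swap (⟨i, Nat.lt_of_succ_lt h⟩ : Fin n) ⟨i+1, h⟩)⁻¹ x =
      Equiv.swap (⟨i, Nat.lt_of_succ_lt h⟩ : Fin n) ⟨i+1, h⟩ (σ⁻¹ x) := by
  simp [mul_inv_rev, Equiv.Perm.mul_apply]

lemma invF_mul_swap {i : ℕ} (h : i + 1 < n) (σ : Equiv.Perm (Fin n))
    (hd : σ ⟨i + 1, h⟩ < σ ⟨i, Nat.lt_of_succ_lt h⟩) :
    invF (σ * Equiv.swap (⟨i, Nat.lt_of_succ_lt h⟩ : Fin n) ⟨i+1, h⟩) =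
      (invF σ).erase (σ ⟨i+1, h⟩, σ ⟨i, Nat.lt_of_succ_lt h⟩) := by
  ext ⟨a, b⟩
  simp only [mem_invF, Finset.mem_erase, inv_mul_swap_apply, swap_lt_iff, Ne, Prod.mk.injEq,
    not_and]
  constructor
  · rintro ⟨hab, hlt | ⟨hb, ha⟩⟩
    · refine ⟨fun hav hbv => ?_, hab, hlt.1⟩
      exact hlt.2 (by rw [hbv]; simp) (by rw [hav]; simp)
    · exfalso
      have ha' : a = σ ⟨i, Nat.lt_of_succ_lt h⟩ := by
        have := congrArg σ (Fin.ext ha : σ⁻¹ a = ⟨i, Nat.lt_of_succ_lt h⟩)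
        simpa using this
      have hb' : b = σ ⟨i+1, h⟩ := by
        have := congrArg σ (Fin.ext hb : σ⁻¹ b = ⟨i+1, h⟩)
        simpa using this
      rw [ha', hb'] at hab
      exact absurd hab (not_lt.2 hd.le)
  · rintro ⟨hne, hab, hlt⟩
    refine ⟨hab, Or.inl ⟨hlt, fun hb ha => ?_⟩⟩
    have ha' : a = σ ⟨i+1, h⟩ := by
      have := congrArg σ (Fin.ext ha : σ⁻¹ a = ⟨i+1, h⟩)
      simpa using this
    have hb' : b = σ ⟨i, Nat.lt_of_succ_lt h⟩ := by
      have := congrArg σ (Fin.ext hb : σ⁻¹ b = ⟨i, Nat.lt_of_succ_lt h⟩)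
      simpa using this
    exact hne ha' hb'

lemma pair_mem_invF {i : ℕ} (h : i + 1 < n) (σ : Equiv.Perm (Fin n))
    (hd : σ ⟨i + 1, h⟩ < σ ⟨i, Nat.lt_of_succ_lt h⟩) :
    (σ ⟨i+1, h⟩, σ ⟨i, Nat.lt_of_succ_lt h⟩) ∈ invF σ := by
  simp only [mem_invF]
  exact ⟨hd, by simp [Fin.lt_def]⟩

lemma subset_of_wCov {σ τ : Equiv.Perm (Fin n)} (hc : wCov σ τ) : invF τ ⊆ invF σ := by
  obtain ⟨i, h, hd, rfl⟩ := hc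
  rw [invF_mul_swap h σ hd]
  exact Finset.erase_subset _ _

lemma subset_of_weakLe {σ τ : Equiv.Perm (Fin n)} (hle : weakLe τ σ) : invF τ ⊆ invF σ := by
  induction hle with
  | refl => exact subset_rfl
  | tail _hab hbc ih => exact (subset_of_wCov hbc).trans ih

lemma eq_of_invF_eq {σ τ : Equiv.Perm (Fin n)} (he : invF τ = invF σ) : τ = σ := by
  have key : StrictMono (fun p : Fin n => τ⁻¹ (σ p)) := by
    intro p p' hpp
    rcases lt_trichotomy (σ p) (σ p') with hab | hab | hab
    · have h1 : (σ p, σ p') ∉ invF σ := by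
        simp only [mem_invF, not_and]
        intro _
        simpa using hpp.le
      rw [← he] at h1
      simp only [mem_invF, not_and] at h1
      have h2 := h1 hab
      have hne : τ⁻¹ (σ p) ≠ τ⁻¹ (σ p') := fun hx =>
        hpp.ne (σ.injective (τ⁻¹.injective hx))
      exact lt_of_le_of_ne (not_lt.1 h2) hne
    · exact absurd (σ.injective hab) hpp.ne
    · have h1 : (σ p', σ p) ∈ invF σ := by
        simp only [mem_invF]
        exact ⟨hab, by simpa using hpp⟩
      rw [← he] at h1
      exact (mem_invF.1 h1).2
  have hsurj : Function.Surjective (fun p : Fin n => τ⁻¹ (σ p)) := fun y =>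
    ⟨σ⁻¹ (τ y), by simp⟩
  have hrange : Set.range (fun p : Fin n => τ⁻¹ (σ p)) = Set.range (id : Fin n → Fin n) := by
    rw [hsurj.range_eq, Set.range_id]
  haveI : WellFoundedLT (Fin n) := inferInstance
  have hfun := (key.range_inj strictMono_id).1 hrange
  apply Equiv.ext
  intro x
  have hx := congrFun hfun x
  simp only [id] at hx
  calc τ x = τ (τ⁻¹ (σ x)) := by rw [hx]
  _ = σ x := by simp

lemma exists_descent {σ τ : Equiv.Perm (Fin n)} (hsub : invF τ ⊆ invF σ)
    (hne : invF τ ≠ invF σ) :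
    ∃ i : ℕ, ∃ h : i + 1 < n, σ ⟨i+1, h⟩ < σ ⟨i, Nat.lt_of_succ_lt h⟩ ∧
      (σ ⟨i+1, h⟩, σ ⟨i, Nat.lt_of_succ_lt h⟩) ∉ invF τ := by
  classical
  have hex : ∃ p : Fin n × Fin n, p ∈ invF σ ∧ p ∉ invF τ := by
    by_contra hc
    push_neg at hc
    exact hne (Finset.Subset.antisymm hsub hc)
  set D : Set ℕ := {d | ∃ p : Fin n × Fin n, p ∈ invF σ ∧ p ∉ invF τ ∧
    (σ⁻¹ p.1).val - (σ⁻¹ p.2).val = d} with hD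
  have hDne : D.Nonempty := by
    obtain ⟨p, h1, h2⟩ := hex
    exact ⟨_, p, h1, h2, rfl⟩
  obtain ⟨⟨a, b⟩, hpσ, hpτ, hdist⟩ := Nat.sInf_mem hDne
  have hab : a < b := (mem_invF'.1 hpσ).1
  have hpos : σ⁻¹ b < σ⁻¹ a := (mem_invF'.1 hpσ).2
  have hposv : (σ⁻¹ b).val < (σ⁻¹ a).val := hpos
  have hdist' : (σ⁻¹ a).val - (σ⁻¹ b).val = sInf D := hdist
  have hpan : (σ⁻¹ a).val < n := (σ⁻¹ a).isLt
  have hτab : ¬ (τ⁻¹ b < τ⁻¹ a) := fun hx => hpτ (mem_invF'.2 ⟨hab, hx⟩)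
  have hmem : ∀ x y : Fin n, (x, y) ∈ invF σ →
      (σ⁻¹ x).val - (σ⁻¹ y).val < (σ⁻¹ a).val - (σ⁻¹ b).val → (x, y) ∈ invF τ := by
    intro x y hm hlt
    by_contra hn
    have h0 : ((σ⁻¹ x).val - (σ⁻¹ y).val) ∈ D := ⟨(x, y), hm, hn, rfl⟩
    have := Nat.sInf_le h0
    omega
  by_cases hadj : (σ⁻¹ a).val = (σ⁻¹ b).val + 1
  · have hn2 : (σ⁻¹ b).val + 1 < n := by omega
    have e1 : (⟨(σ⁻¹ b).val + 1, hn2⟩ : Fin n) = σ⁻¹ a := Fin.ext hadj.symm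
    have e2 : (⟨(σ⁻¹ b).val, Nat.lt_of_succ_lt hn2⟩ : Fin n) = σ⁻¹ b := Fin.ext rfl
    refine ⟨(σ⁻¹ b).val, hn2, ?_, ?_⟩
    · rw [e1, e2]
      simpa using hab
    · rw [e1, e2]
      simpa using hpτ
  · exfalso
    have hle2 : (σ⁻¹ b).val + 2 ≤ (σ⁻¹ a).val := by omega
    have hrlt : (σ⁻¹ b).val + 1 < n := by omega
    set r : Fin n := ⟨(σ⁻¹ b).val + 1, hrlt⟩ with hrdef
    have hrval : (σ⁻¹ (σ r)).val = (σ⁻¹ b).val + 1 := by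
      rw [Equiv.Perm.inv_apply_self]
    rcases lt_trichotomy (σ r) a with hcl | hcl | hcl
    · have hm1 : (σ r, b) ∈ invF σ := mem_invF'.2 ⟨hcl.trans hab, Fin.lt_def.2 (by omega)⟩
      have h1 : (σ r, b) ∈ invF τ := hmem (σ r) b hm1 (by omega)
      have h1' : τ⁻¹ b < τ⁻¹ (σ r) := (mem_invF'.1 h1).2
      have h2 : (σ r, a) ∉ invF σ := by
        intro hx
        have hx' : (σ⁻¹ a).val < (σ⁻¹ (σ r)).val := (mem_invF'.1 hx).2
        rw [hrval] at hx'
        omega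
      have h2' : ¬ (τ⁻¹ a < τ⁻¹ (σ r)) := fun hx => h2 (hsub (mem_invF'.2 ⟨hcl, hx⟩))
      exact h2' (lt_of_le_of_lt (not_lt.1 hτab) h1')
    · have : (σ⁻¹ a).val = (σ⁻¹ b).val + 1 := by rw [← hcl, hrval]
      omega
    · rcases lt_trichotomy (σ r) b with hcb' | hcb' | hcb'
      · have hm1 : (a, σ r) ∈ invF σ := mem_invF'.2 ⟨hcl, Fin.lt_def.2 (by omega)⟩
        have h1 : (a, σ r) ∈ invF τ := hmem a (σ r) hm1 (by omega)
        have hm2 : (σ r, b) ∈ invF σ := mem_invF'.2 ⟨hcb', Fin.lt_def.2 (by omega)⟩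
        have h2 : (σ r, b) ∈ invF τ := hmem (σ r) b hm2 (by omega)
        have e1 : τ⁻¹ (σ r) < τ⁻¹ a := (mem_invF'.1 h1).2
        have e2 : τ⁻¹ b < τ⁻¹ (σ r) := (mem_invF'.1 h2).2
        exact hτab (e2.trans e1)
      · have : (σ⁻¹ b).val = (σ⁻¹ b).val + 1 := by
          conv_lhs => rw [← hcb']
          rw [hrval]
        omega
      · have hm1 : (a, σ r) ∈ invF σ := mem_invF'.2 ⟨hab.trans hcb', Fin.lt_def.2 (by omega)⟩
        have h1 : (a, σ r) ∈ invF τ := hmem a (σ r) hm1 (by omega)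
        have e1 : τ⁻¹ (σ r) < τ⁻¹ a := (mem_invF'.1 h1).2
        have h2 : (b, σ r) ∉ invF σ := by
          intro hx
          have hx' : (σ⁻¹ (σ r)).val < (σ⁻¹ b).val := (mem_invF'.1 hx).2
          rw [hrval] at hx'
          omega
        have h2' : ¬ (τ⁻¹ (σ r) < τ⁻¹ b) := fun hx => h2 (hsub (mem_invF'.2 ⟨hcb', hx⟩))
        exact absurd e1 (not_lt.2 ((not_lt.1 hτab).trans (not_lt.1 h2')))

lemma weakLe_of_subset_aux :
    ∀ m : ℕ, ∀ σ τ : Equiv.Perm (Fin n), (invF σ).card ≤ m → invF τ ⊆ invF σ → weakLe τ σ := by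
  intro m
  induction m with
  | zero =>
    intro σ τ hc hsub
    have h0 : invF σ = ∅ := Finset.card_eq_zero.1 (Nat.le_zero.1 hc)
    have hτ : invF τ = invF σ := by
      rw [h0] at hsub ⊢
      exact Finset.subset_empty.1 hsub
    rw [eq_of_invF_eq hτ]
    exact Relation.ReflTransGen.refl
  | succ m ih =>
    intro σ τ hc hsub
    by_cases he : invF τ = invF σ
    · rw [eq_of_invF_eq he]
      exact Relation.ReflTransGen.refl
    · obtain ⟨i, h, hd, hpair⟩ := exists_descent hsub he
      have hinv' := invF_mul_swap h σ hd
      refine Relation.ReflTransGen.head (⟨i, h, hd, rfl⟩ : wCov σ _) (ih _ τ ?_ ?_)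
      · rw [hinv', Finset.card_erase_of_mem (pair_mem_invF h σ hd)]
        omega
      · rw [hinv']
        intro p hp
        exact Finset.mem_erase.2 ⟨fun hq => hpair (hq ▸ hp), hsub hp⟩

lemma weakLe_of_subset {σ τ : Equiv.Perm (Fin n)} (hsub : invF τ ⊆ invF σ) : weakLe τ σ :=
  weakLe_of_subset_aux (invF σ).card σ τ le_rfl hsub

lemma swap_congr (a b c d : Fin n) (h1 : a = c) (h2 : b = d) :
    Equiv.swap a b = Equiv.swap c d := by rw [h1, h2]

lemma cyc_apply_aux (j : ℕ) : ∀ (m : ℕ) (h : j + m + 1 < n) (x : ℕ) (hx : x < n),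
    (cyc n (j + m) j h) ⟨x, hx⟩ =
      if x = j then ⟨j + m + 1, h⟩
      else if j < x ∧ x ≤ j + m + 1 then ⟨x - 1, by omega⟩
      else ⟨x, hx⟩ := by
  intro m
  induction m with
  | zero =>
    intro h x hx
    have harg : j + 0 + 1 - j = 1 := by omega
    simp only [cyc, harg, List.range_succ_eq_map, List.range_zero, List.map_nil,
      List.map_cons, List.prod_cons, List.prod_nil, mul_one]
    simp only [Equiv.swap_apply_def]
    split_ifs <;>
      first
        | rfl
        | (apply Fin.ext; simp only [Fin.ext_iff, Fin.val_mk, Fin.lt_def] at *; omega)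
        | (exfalso; simp only [Fin.ext_iff, Fin.val_mk, Fin.lt_def] at *; omega)
  | succ m ih =>
    intro h x hx
    have h₂ : j + m + 1 < n := by omega
    have harg : j + (m + 1) + 1 - j = m + 2 := by omega
    have hlist : cyc n (j + (m + 1)) j h =
        Equiv.swap (⟨j + m + 1, h₂⟩ : Fin n) ⟨j + m + 2, by omega⟩ * cyc n (j + m) j h₂ := by
      simp only [cyc, harg, show j + m + 1 - j = m + 1 from by omega]
      rw [List.range_succ_eq_map, List.map_cons, List.prod_cons, List.map_map]
      congr 1
      apply congrArg List.prod
      apply List.map_congr_left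
      intro k hk
      simp only [Function.comp_apply, show j + (m + 1) - (k + 1) = j + m - k from by omega]
    rw [hlist, Equiv.Perm.mul_apply, ih h₂ x hx]
    split_ifs with h1 h2' h3 h4 h5 h6 <;>
      simp only [Equiv.swap_apply_def] <;>
      split_ifs <;>
      first
        | rfl
        | (apply Fin.ext; simp only [Fin.ext_iff, Fin.val_mk, Fin.lt_def] at *; omega)
        | (exfalso; simp only [Fin.ext_iff, Fin.val_mk, Fin.lt_def] at *; omega)

lemma cyc_apply {i j x : ℕ} (h : i + 1 < n) (hj : j ≤ i) (hx : x < n) :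
    (cyc n i j h) ⟨x, hx⟩ =
      if x = j then ⟨i + 1, h⟩
      else if j < x ∧ x ≤ i + 1 then ⟨x - 1, by omega⟩
      else ⟨x, hx⟩ := by
  obtain ⟨m, rfl⟩ : ∃ m, i = j + m := ⟨i - j, by omega⟩
  exact cyc_apply_aux j m h x hx

lemma cyc_symm_apply_top {i j : ℕ} (h : i + 1 < n) (hj : j ≤ i) :
    (cyc n i j h)⁻¹ ⟨i + 1, h⟩ = ⟨j, by omega⟩ := by
  apply (cyc n i j h).injective
  rw [Equiv.Perm.apply_inv_self, cyc_apply (x := j) h hj (by omega), if_pos rfl]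

lemma cyc_symm_apply_mid {i j y : ℕ} (h : i + 1 < n) (hj : j ≤ i)
    (hy1 : j ≤ y) (hy2 : y ≤ i) :
    (cyc n i j h)⁻¹ ⟨y, by omega⟩ = ⟨y + 1, by omega⟩ := by
  apply (cyc n i j h).injective
  rw [Equiv.Perm.apply_inv_self, cyc_apply (x := y + 1) h hj (by omega),
    if_neg (by omega), if_pos (by omega)]
  exact Fin.ext (by simp only [Fin.val_mk]; omega)

lemma cyc_symm_apply_out {i j y : ℕ} (h : i + 1 < n) (hj : j ≤ i) (hy : y < n)
    (hout : y < j ∨ i + 1 < y) :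
    (cyc n i j h)⁻¹ ⟨y, hy⟩ = ⟨y, hy⟩ := by
  apply (cyc n i j h).injective
  rw [Equiv.Perm.apply_inv_self, cyc_apply (x := y) h hj hy,
    if_neg (by omega), if_neg (by omega)]


-- ### jmin facts and the map τᵢ

section Main

variable (σ : Equiv.Perm (Fin n)) (i : ℕ) (h : i + 1 < n)

lemma jmin_mem_set : ∀ k, i ≤ k → ∀ hk : k ≤ i,
    σ ⟨i, Nat.lt_of_succ_lt h⟩ ≤ σ ⟨k, by omega⟩ := by
  intro k hk1 hk2
  have hki : k = i := le_antisymm hk2 hk1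
  subst hki
  exact le_rfl

lemma jmin_le : jmin σ i h ≤ i := by
  apply Nat.sInf_le
  exact jmin_mem_set σ i h

lemma jmin_spec : ∀ k, jmin σ i h ≤ k → ∀ hk : k ≤ i,
    σ ⟨i, Nat.lt_of_succ_lt h⟩ ≤ σ ⟨k, by omega⟩ := by
  have hne : Set.Nonempty {j : ℕ | ∀ k, j ≤ k → ∀ hk : k ≤ i,
      σ ⟨i, Nat.lt_of_succ_lt h⟩ ≤ σ ⟨k, by omega⟩} := ⟨i, jmin_mem_set σ i h⟩
  exact Nat.sInf_mem hne

lemma jmin_pred (hpos : 0 < jmin σ i h) (hpf : jmin σ i h - 1 < n) :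
    σ ⟨jmin σ i h - 1, hpf⟩ < σ ⟨i, Nat.lt_of_succ_lt h⟩ := by
  have hnotmem : (jmin σ i h - 1) ∉ {j : ℕ | ∀ k, j ≤ k → ∀ hk : k ≤ i,
      σ ⟨i, Nat.lt_of_succ_lt h⟩ ≤ σ ⟨k, by omega⟩} := by
    intro hm
    have hle : jmin σ i h ≤ jmin σ i h - 1 := Nat.sInf_le hm
    omega
  simp only [Set.mem_setOf_eq, not_forall, not_le] at hnotmem
  obtain ⟨k, hk1, hk2, hlt⟩ := hnotmem
  by_cases hkge : jmin σ i h ≤ k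
  · exact absurd (jmin_spec σ i h k hkge hk2) (not_le.2 hlt)
  · have hkeq : k = jmin σ i h - 1 := by omega
    subst hkeq
    exact hlt

lemma tau_inv (J : ℕ) (hJ : J ≤ i) (x : Fin n) :
    (σ * cyc n i J h)⁻¹ x = (cyc n i J h)⁻¹ (σ⁻¹ x) := by
  simp [mul_inv_rev, Equiv.Perm.mul_apply]

lemma cyc_symm_split (J : ℕ) (hJ : J ≤ i) (x : Fin n) :
    ∃ y, ∃ hy : y < n, (cyc n i J h)⁻¹ x = ⟨y, hy⟩ ∧
      ((x.val = i + 1 ∧ y = J) ∨ (J ≤ x.val ∧ x.val ≤ i ∧ y = x.val + 1) ∨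
        ((x.val < J ∨ i + 1 < x.val) ∧ y = x.val)) := by
  by_cases h1 : x.val = i + 1
  · have hx : x = ⟨i + 1, h⟩ := Fin.ext h1
    subst hx
    exact ⟨J, by omega, cyc_symm_apply_top h hJ, Or.inl ⟨rfl, rfl⟩⟩
  · by_cases h2 : J ≤ x.val ∧ x.val ≤ i
    · refine ⟨x.val + 1, by omega, ?_, Or.inr (Or.inl ⟨h2.1, h2.2, rfl⟩)⟩
      have := cyc_symm_apply_mid (y := x.val) h hJ h2.1 h2.2
      rwa [Fin.eta] at this
    · refine ⟨x.val, x.isLt, ?_, Or.inr (Or.inr ⟨by omega, rfl⟩)⟩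
      have := cyc_symm_apply_out (y := x.val) h hJ x.isLt (by omega)
      rwa [Fin.eta] at this

lemma cyc_symm_lt_iff (J : ℕ) (hJ : J ≤ i) (p q : Fin n) :
    (cyc n i J h)⁻¹ p < (cyc n i J h)⁻¹ q ↔
      ((p < q ∧ ¬(q.val = i + 1 ∧ J ≤ p.val ∧ p.val ≤ i)) ∨
        (p.val = i + 1 ∧ J ≤ q.val ∧ q.val ≤ i)) := by
  obtain ⟨yp, hyp, ep, hp⟩ := cyc_symm_split i h J hJ p
  obtain ⟨yq, hyq, eq', hq⟩ := cyc_symm_split i h J hJ q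
  rw [ep, eq']
  have hpq : p.val ≠ q.val ∨ p.val = q.val := (ne_or_eq _ _)
  rcases hp with ⟨hp1, hp2⟩ | ⟨hp1, hp2, hp3⟩ | ⟨hp1, hp2⟩ <;>
    rcases hq with ⟨hq1, hq2⟩ | ⟨hq1, hq2, hq3⟩ | ⟨hq1, hq2⟩ <;>
    simp only [Fin.lt_def, Fin.val_mk] <;> omega

lemma invF_tau_mem (J : ℕ) (hJ : J ≤ i)
    (hd : σ ⟨i + 1, h⟩ < σ ⟨i, Nat.lt_of_succ_lt h⟩)
    (hwin : ∀ k, ∀ hk : k < n, J ≤ k → k ≤ i →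
      σ ⟨i, Nat.lt_of_succ_lt h⟩ ≤ σ ⟨k, hk⟩)
    (a b : Fin n) :
    (a, b) ∈ invF (σ * cyc n i J h) ↔
      ((a, b) ∈ invF σ ∧
        ¬(a = σ ⟨i + 1, h⟩ ∧ J ≤ (σ⁻¹ b).val ∧ (σ⁻¹ b).val ≤ i)) := by
  have htop : ∀ x : Fin n, ((σ⁻¹ x).val = i + 1 ↔ x = σ ⟨i + 1, h⟩) := by
    intro x
    constructor
    · intro hx
      have h1 : σ⁻¹ x = ⟨i + 1, h⟩ := Fin.ext hx
      rw [← h1, Equiv.Perm.apply_inv_self]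
    · intro hx
      rw [hx, Equiv.Perm.inv_apply_self]
  rw [mem_invF', mem_invF', tau_inv σ i h J hJ, tau_inv σ i h J hJ,
    cyc_symm_lt_iff i h J hJ]
  constructor
  · rintro ⟨hab, hlt | ⟨hbtop, hw1, hw2⟩⟩
    · exact ⟨⟨hab, hlt.1⟩, fun hx => hlt.2 ⟨(htop a).2 hx.1, hx.2⟩⟩
    · exfalso
      have hbv : b = σ ⟨i + 1, h⟩ := (htop b).1 hbtop
      have haw : σ ⟨i, Nat.lt_of_succ_lt h⟩ ≤ a := by
        have h1 := hwin (σ⁻¹ a).val (σ⁻¹ a).isLt hw1 hw2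
        rwa [Fin.eta, Equiv.Perm.apply_inv_self] at h1
      rw [hbv] at hab
      exact absurd (lt_trans hab hd) (not_lt.2 haw)
  · rintro ⟨⟨hab, hlt⟩, hnot⟩
    exact ⟨hab, Or.inl ⟨hlt, fun hx => hnot ⟨(htop a).1 hx.1, hx.2.1, hx.2.2⟩⟩⟩

lemma tau_apply_J (J : ℕ) (hJ : J ≤ i) (hJn : J < n) :
    (σ * cyc n i J h) ⟨J, hJn⟩ = σ ⟨i + 1, h⟩ := by
  rw [Equiv.Perm.mul_apply, cyc_apply h hJ hJn, if_pos rfl]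

lemma tau_apply_mid (J x : ℕ) (hJ : J ≤ i) (hx : x < n) (h1 : J < x) (h2 : x ≤ i + 1) :
    (σ * cyc n i J h) ⟨x, hx⟩ = σ ⟨x - 1, by omega⟩ := by
  rw [Equiv.Perm.mul_apply, cyc_apply h hJ hx, if_neg (by omega), if_pos (by omega)]

lemma tau_apply_out (J x : ℕ) (hJ : J ≤ i) (hx : x < n) (hout : x < J ∨ i + 1 < x) :
    (σ * cyc n i J h) ⟨x, hx⟩ = σ ⟨x, hx⟩ := by
  rw [Equiv.Perm.mul_apply, cyc_apply h hJ hx, if_neg (by omega), if_neg (by omega)]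

lemma av_tau (hσ : Av312 σ) (J : ℕ) (hJ : J ≤ i)
    (hd : σ ⟨i + 1, h⟩ < σ ⟨i, Nat.lt_of_succ_lt h⟩)
    (hwin : ∀ k, ∀ hk : k < n, J ≤ k → k ≤ i →
      σ ⟨i, Nat.lt_of_succ_lt h⟩ ≤ σ ⟨k, hk⟩)
    (hpred : ∀ hpf : J - 1 < n, 0 < J → σ ⟨J - 1, hpf⟩ < σ ⟨i, Nat.lt_of_succ_lt h⟩) :
    Av312 (σ * cyc n i J h) := by
  rintro ⟨p1, p2, p3, h12, h23, h31, h32⟩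
  have hσ' : ∀ q1 q2 q3 : Fin n, q1 < q2 → q2 < q3 → σ q3 < σ q1 → σ q2 < σ q3 → False :=
    fun q1 q2 q3 a b c d => hσ ⟨q1, q2, q3, a, b, c, d⟩
  have t12 := Fin.lt_def.1 h12
  have t23 := Fin.lt_def.1 h23
  have hsplit : ∀ x : Fin n, x.val ≠ J → ∃ y, ∃ hy : y < n,
      (σ * cyc n i J h) x = σ ⟨y, hy⟩ ∧
        ((J < x.val ∧ x.val ≤ i + 1 ∧ y = x.val - 1) ∨
          ((x.val < J ∨ i + 1 < x.val) ∧ y = x.val)) := by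
    intro x hne
    by_cases h1 : J < x.val ∧ x.val ≤ i + 1
    · refine ⟨x.val - 1, by omega, ?_, Or.inl ⟨h1.1, h1.2, rfl⟩⟩
      have := tau_apply_mid σ i h J x.val hJ x.isLt h1.1 h1.2
      rwa [Fin.eta] at this
    · refine ⟨x.val, x.isLt, ?_, Or.inr ⟨by omega, rfl⟩⟩
      have := tau_apply_out σ i h J x.val hJ x.isLt (by omega)
      rwa [Fin.eta] at this
  have hJlt : J < n := by omega
  have htauJ : ∀ x : Fin n, x.val = J → (σ * cyc n i J h) x = σ ⟨i + 1, h⟩ := by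
    intro x hx
    have hx' : x = ⟨J, hJlt⟩ := Fin.ext hx
    rw [hx']
    exact tau_apply_J σ i h J hJ hJlt
  by_cases hc1 : p1.val = J
  · have hv1 := htauJ p1 hc1
    obtain ⟨y2, hy2, e2, r2⟩ := hsplit p2 (by omega)
    obtain ⟨y3, hy3, e3, r3⟩ := hsplit p3 (by omega)
    rcases r2 with ⟨ha, hb, hy⟩ | ⟨ha, hy⟩
    · have hwin2 : σ ⟨i, Nat.lt_of_succ_lt h⟩ ≤ σ ⟨y2, hy2⟩ := hwin y2 hy2 (by omega) (by omega)
      rw [hv1] at h31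
      rw [e2] at h32
      exact absurd (lt_trans (lt_trans h32 h31) hd) (not_lt.2 hwin2)
    · have hx2 : i + 1 < p2.val := by omega
      have hy3eq : y3 = p3.val := by rcases r3 with ⟨u1, u2, u3⟩ | ⟨u1, u2⟩ <;> omega
      rw [hv1, e3] at h31
      rw [e2, e3] at h32
      exact hσ' ⟨i + 1, h⟩ ⟨y2, hy2⟩ ⟨y3, hy3⟩ (by rw [Fin.lt_def]; simp only [Fin.val_mk]; omega)
        (by rw [Fin.lt_def]; simp only [Fin.val_mk]; omega) h31 h32
  · by_cases hc2 : p2.val = J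
    · have hv2 := htauJ p2 hc2
      have h1J : p1.val < J := by omega
      obtain ⟨y1, hy1, e1, r1⟩ := hsplit p1 (by omega)
      have hy1eq : y1 = p1.val := by rcases r1 with ⟨u1, u2, u3⟩ | ⟨u1, u2⟩ <;> omega
      obtain ⟨y3, hy3, e3, r3⟩ := hsplit p3 (by omega)
      rw [e1, e3] at h31
      rcases r3 with ⟨ha, hb, hy⟩ | ⟨ha, hy⟩
      · have hwin3 : σ ⟨i, Nat.lt_of_succ_lt h⟩ ≤ σ ⟨y3, hy3⟩ := hwin y3 hy3 (by omega) (by omega)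
        have hJpos : 0 < J := by omega
        have hpredJ := hpred (by omega) hJpos
        by_cases hx1 : y1 = J - 1
        · have he : (⟨y1, hy1⟩ : Fin n) = ⟨J - 1, by omega⟩ := Fin.ext hx1
          rw [he] at h31
          exact lt_irrefl _ (lt_trans h31 (lt_of_lt_of_le hpredJ hwin3))
        · exact hσ' ⟨y1, hy1⟩ ⟨J - 1, by omega⟩ ⟨y3, hy3⟩ (by rw [Fin.lt_def]; simp only [Fin.val_mk]; omega)
            (by rw [Fin.lt_def]; simp only [Fin.val_mk]; omega) h31 (lt_of_lt_of_le hpredJ hwin3)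
      · have hx3 : i + 1 < p3.val := by omega
        rw [hv2, e3] at h32
        exact hσ' ⟨y1, hy1⟩ ⟨i + 1, h⟩ ⟨y3, hy3⟩ (by rw [Fin.lt_def]; simp only [Fin.val_mk]; omega)
          (by rw [Fin.lt_def]; simp only [Fin.val_mk]; omega) h31 h32
    · by_cases hc3 : p3.val = J
      · have hv3 := htauJ p3 hc3
        obtain ⟨y1, hy1, e1, r1⟩ := hsplit p1 (by omega)
        have hy1eq : y1 = p1.val := by rcases r1 with ⟨u1, u2, u3⟩ | ⟨u1, u2⟩ <;> omega
        obtain ⟨y2, hy2, e2, r2⟩ := hsplit p2 (by omega)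
        have hy2eq : y2 = p2.val := by rcases r2 with ⟨u1, u2, u3⟩ | ⟨u1, u2⟩ <;> omega
        rw [e1, hv3] at h31
        rw [e2, hv3] at h32
        exact hσ' ⟨y1, hy1⟩ ⟨y2, hy2⟩ ⟨i + 1, h⟩ (by rw [Fin.lt_def]; simp only [Fin.val_mk]; omega)
          (by rw [Fin.lt_def]; simp only [Fin.val_mk]; omega) h31 h32
      · obtain ⟨y1, hy1, e1, r1⟩ := hsplit p1 (by omega)
        obtain ⟨y2, hy2, e2, r2⟩ := hsplit p2 (by omega)
        obtain ⟨y3, hy3, e3, r3⟩ := hsplit p3 (by omega)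
        rw [e1, e3] at h31
        rw [e2, e3] at h32
        have hm12 : y1 < y2 := by
          rcases r1 with ⟨u1, u2, u3⟩ | ⟨u1, u2⟩ <;> rcases r2 with ⟨w1, w2, w3⟩ | ⟨w1, w2⟩ <;>
            omega
        have hm23 : y2 < y3 := by
          rcases r2 with ⟨u1, u2, u3⟩ | ⟨u1, u2⟩ <;> rcases r3 with ⟨w1, w2, w3⟩ | ⟨w1, w2⟩ <;>
            omega
        exact hσ' ⟨y1, hy1⟩ ⟨y2, hy2⟩ ⟨y3, hy3⟩ (Fin.lt_def.2 hm12) (Fin.lt_def.2 hm23) h31 h32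


-- ### Properties of τᵢ = σ ∘ cyc, and the key lemma

lemma T_window (k : ℕ) (hk : k < n) (h1 : jmin σ i h ≤ k) (h2 : k ≤ i) :
    σ ⟨i, Nat.lt_of_succ_lt h⟩ ≤ σ ⟨k, hk⟩ :=
  jmin_spec σ i h k h1 h2

lemma T_mem_iff (hd : σ ⟨i + 1, h⟩ < σ ⟨i, Nat.lt_of_succ_lt h⟩) (a b : Fin n) :
    (a, b) ∈ invF (σ * cyc n i (jmin σ i h) h) ↔
      ((a, b) ∈ invF σ ∧
        ¬(a = σ ⟨i + 1, h⟩ ∧ jmin σ i h ≤ (σ⁻¹ b).val ∧ (σ⁻¹ b).val ≤ i)) :=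
  invF_tau_mem σ i h (jmin σ i h) (jmin_le σ i h) hd (T_window σ i h) a b

lemma T_subset (hd : σ ⟨i + 1, h⟩ < σ ⟨i, Nat.lt_of_succ_lt h⟩) :
    invF (σ * cyc n i (jmin σ i h) h) ⊆ invF σ := by
  intro p hp
  rcases p with ⟨a, b⟩
  exact ((T_mem_iff σ i h hd a b).1 hp).1

lemma T_pair_not_mem (hd : σ ⟨i + 1, h⟩ < σ ⟨i, Nat.lt_of_succ_lt h⟩) :
    (σ ⟨i + 1, h⟩, σ ⟨i, Nat.lt_of_succ_lt h⟩) ∉ invF (σ * cyc n i (jmin σ i h) h) := by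
  rw [T_mem_iff σ i h hd]
  rintro ⟨-, hno⟩
  refine hno ⟨rfl, ?_, ?_⟩ <;> rw [Equiv.Perm.inv_apply_self]
  exact jmin_le σ i h

lemma T_ne_sigma (hd : σ ⟨i + 1, h⟩ < σ ⟨i, Nat.lt_of_succ_lt h⟩) :
    σ * cyc n i (jmin σ i h) h ≠ σ := by
  intro he
  have := T_pair_not_mem σ i h hd
  rw [he] at this
  exact this (pair_mem_invF h σ hd)

lemma T_av (hσ : Av312 σ) (hd : σ ⟨i + 1, h⟩ < σ ⟨i, Nat.lt_of_succ_lt h⟩) :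
    Av312 (σ * cyc n i (jmin σ i h) h) := by
  refine av_tau σ i h hσ (jmin σ i h) (jmin_le σ i h) hd (T_window σ i h) ?_
  intro hpf hpos
  exact jmin_pred σ i h hpos hpf

lemma T_le (hd : σ ⟨i + 1, h⟩ < σ ⟨i, Nat.lt_of_succ_lt h⟩) :
    weakLe (σ * cyc n i (jmin σ i h) h) σ :=
  weakLe_of_subset (T_subset σ i h hd)

/-- The key lemma: any 312-avoiding `ρ` below `σ·sᵢ` is below `τᵢ`. -/
lemma star (hd : σ ⟨i + 1, h⟩ < σ ⟨i, Nat.lt_of_succ_lt h⟩)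
    (ρ : Equiv.Perm (Fin n)) (hρav : Av312 ρ)
    (hsub : invF ρ ⊆ invF (σ * Equiv.swap ⟨i, Nat.lt_of_succ_lt h⟩ ⟨i + 1, h⟩)) :
    invF ρ ⊆ invF (σ * cyc n i (jmin σ i h) h) := by
  intro p hp
  rcases p with ⟨a, b⟩
  rw [T_mem_iff σ i h hd]
  have hmemσ' := hsub hp
  rw [invF_mul_swap h σ hd] at hmemσ'
  have hmemσ : (a, b) ∈ invF σ := Finset.mem_erase.1 hmemσ' |>.2
  have hnepair : (a, b) ≠ (σ ⟨i + 1, h⟩, σ ⟨i, Nat.lt_of_succ_lt h⟩) :=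
    Finset.mem_erase.1 hmemσ' |>.1
  refine ⟨hmemσ, ?_⟩
  rintro ⟨hav, hw1, hw2⟩
  by_cases hri : (σ⁻¹ b).val = i
  · -- then (a, b) is exactly the removed pair
    apply hnepair
    have hb : b = σ ⟨i, Nat.lt_of_succ_lt h⟩ := by
      have h1 : σ⁻¹ b = ⟨i, Nat.lt_of_succ_lt h⟩ := Fin.ext hri
      rw [← h1, Equiv.Perm.apply_inv_self]
    rw [hav, hb]
  · -- r < i : construct a 312 pattern in ρ
    exfalso
    have hab : a < b := (mem_invF'.1 hmemσ).1
    have hrlt : (σ⁻¹ b).val < i := by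
      omega
    -- b = σ ⟨r⟩ is in the window, strictly above σ ⟨i⟩
    have hbwin : σ ⟨i, Nat.lt_of_succ_lt h⟩ ≤ b := by
      have h1 := T_window σ i h (σ⁻¹ b).val (σ⁻¹ b).isLt hw1 (by omega)
      rwa [Fin.eta, Equiv.Perm.apply_inv_self] at h1
    have hbne : σ ⟨i, Nat.lt_of_succ_lt h⟩ ≠ b := by
      intro he
      have := congrArg (fun x => (σ⁻¹ x).val) he
      simp only [Equiv.Perm.inv_apply_self] at this
      omega
    have hmb : σ ⟨i, Nat.lt_of_succ_lt h⟩ < b := lt_of_le_of_ne hbwin hbne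
    -- positions in ρ
    have hpos1 : ρ⁻¹ b < ρ⁻¹ a := (mem_invF'.1 hp).2
    have hpair' : (σ ⟨i + 1, h⟩, σ ⟨i, Nat.lt_of_succ_lt h⟩) ∉ invF ρ := by
      intro hx
      have := hsub hx
      rw [invF_mul_swap h σ hd] at this
      exact (Finset.mem_erase.1 this).1 rfl
    have hpos2 : ρ⁻¹ a < ρ⁻¹ (σ ⟨i, Nat.lt_of_succ_lt h⟩) := by
      have hnlt : ¬ (ρ⁻¹ (σ ⟨i, Nat.lt_of_succ_lt h⟩) < ρ⁻¹ a) := by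
        intro hx
        rw [hav] at hx
        exact hpair' (mem_invF'.2 ⟨hd, hx⟩)
      have hne2 : ρ⁻¹ a ≠ ρ⁻¹ (σ ⟨i, Nat.lt_of_succ_lt h⟩) := by
        intro hx
        have hax : a = σ ⟨i, Nat.lt_of_succ_lt h⟩ := ρ⁻¹.injective hx
        rw [hav] at hax
        exact absurd (σ.injective hax) (by intro hx2; have := congrArg Fin.val hx2; simp at this)
      exact lt_of_le_of_ne (not_lt.1 hnlt) hne2
    -- 312 pattern in ρ at positions (ρ⁻¹ b, ρ⁻¹ a, ρ⁻¹ (σ i)) with values (b, a, σ i)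
    apply hρav
    refine ⟨ρ⁻¹ b, ρ⁻¹ a, ρ⁻¹ (σ ⟨i, Nat.lt_of_succ_lt h⟩), hpos1, hpos2, ?_, ?_⟩
    · rw [Equiv.Perm.apply_inv_self, Equiv.Perm.apply_inv_self]
      exact hmb
    · rw [Equiv.Perm.apply_inv_self, Equiv.Perm.apply_inv_self]
      rw [hav]
      exact hd

lemma T_apply_ne (i' : ℕ) (h' : i' + 1 < n) (hlt : i < i') :
    σ * cyc n i (jmin σ i h) h ≠ σ * cyc n i' (jmin σ i' h') h' := by
  intro he
  have h1 : (σ * cyc n i (jmin σ i h) h) ⟨i' + 1, h'⟩ = σ ⟨i' + 1, h'⟩ :=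
    tau_apply_out σ i h (jmin σ i h) (i' + 1) (jmin_le σ i h) h' (by omega)
  have h2 : (σ * cyc n i' (jmin σ i' h') h') ⟨i' + 1, h'⟩ = σ ⟨i', by omega⟩ := by
    have := tau_apply_mid σ i' h' (jmin σ i' h') (i' + 1) (jmin_le σ i' h') h'
      (by have := jmin_le σ i' h'; omega) (by omega)
    simpa using this
  rw [he, h2] at h1
  have := σ.injective h1
  have := congrArg Fin.val this
  simp at this

lemma psi_eq (hd : σ ⟨i + 1, h⟩ < σ ⟨i, Nat.lt_of_succ_lt h⟩) :
    psi σ (σ * Equiv.swap ⟨i, Nat.lt_of_succ_lt h⟩ ⟨i + 1, h⟩) =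
      σ * cyc n i (jmin σ i h) h := by
  have hset : {a : ℕ | ∃ h' : a + 1 < n,
      σ * Equiv.swap ⟨i, Nat.lt_of_succ_lt h⟩ ⟨i + 1, h⟩ =
        σ * Equiv.swap ⟨a, Nat.lt_of_succ_lt h'⟩ ⟨a + 1, h'⟩} = {i} := by
    ext a
    simp only [Set.mem_setOf_eq, Set.mem_singleton_iff]
    constructor
    · rintro ⟨h', heq⟩
      have hsw : Equiv.swap (⟨i, Nat.lt_of_succ_lt h⟩ : Fin n) ⟨i + 1, h⟩ =
          Equiv.swap ⟨a, Nat.lt_of_succ_lt h'⟩ ⟨a + 1, h'⟩ := mul_left_cancel heq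
      have happ : Equiv.swap (⟨i, Nat.lt_of_succ_lt h⟩ : Fin n) ⟨i + 1, h⟩
          ⟨a, Nat.lt_of_succ_lt h'⟩ = ⟨a + 1, h'⟩ := by
        rw [hsw, Equiv.swap_apply_left]
      rw [Equiv.swap_apply_def] at happ
      split_ifs at happ <;>
        simp only [Fin.ext_iff, Fin.val_mk] at * <;> omega
    · rintro rfl
      exact ⟨h, rfl⟩
  rw [psi]
  simp only [hset]
  have hinf : sInf ({i} : Set ℕ) = i := by
    have : i ∈ ({i} : Set ℕ) := rfl
    have h1 := Nat.sInf_le this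
    have h2 := Nat.sInf_mem (⟨i, this⟩ : Set.Nonempty ({i} : Set ℕ))
    simp only [Set.mem_singleton_iff] at h2
    omega
  simp only [hinf]
  rw [dif_pos h]

end Main

end T13

/-- For a `312`-avoiding permutation `σ`, the map `Ψ` with
`Ψ(σ ∘ (i i+1)) = σ ∘ (i+1 i ⋯ j_i+1 j_i)` is a bijection from
`cov_{S_n}(σ) = {σ ∘ (i i+1) : i a descent of σ}` onto `cov_{Av_n(312)}(σ)`. -/
theorem thm13 (n : ℕ) (σ : Equiv.Perm (Fin n)) (hσ : Av312 σ) :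
    (∀ i : ℕ, ∀ h : i + 1 < n, σ ⟨i + 1, h⟩ < σ ⟨i, Nat.lt_of_succ_lt h⟩ →
      psi σ (σ * Equiv.swap ⟨i, Nat.lt_of_succ_lt h⟩ ⟨i + 1, h⟩) =
        σ * cyc n i (jmin σ i h) h) ∧
    Set.BijOn (psi σ) {τ | wCov σ τ} (covAv σ) := by
  constructor
  · intro i h hd
    exact T13.psi_eq σ i h hd
  · refine ⟨?_, ?_, ?_⟩
    · -- maps to
      rintro τ ⟨i, h, hd, rfl⟩
      rw [T13.psi_eq σ i h hd]
      refine ⟨T13.T_av σ i h hσ hd, T13.T_le σ i h hd, T13.T_ne_sigma σ i h hd, ?_⟩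
      intro ρ hρav hTρ hρσ
      rcases Relation.ReflTransGen.cases_head hρσ with heq | ⟨π, hcov, hle⟩
      · exact Or.inr heq.symm
      · obtain ⟨i', h', hd', rfl⟩ := hcov
        have hsub1 : T13.invF ρ ⊆
            T13.invF (σ * Equiv.swap ⟨i', Nat.lt_of_succ_lt h'⟩ ⟨i' + 1, h'⟩) :=
          T13.subset_of_weakLe hle
        have hsub2 : T13.invF ρ ⊆ T13.invF (σ * cyc n i' (jmin σ i' h') h') :=
          T13.star σ i' h' hd' ρ hρav hsub1
        have hsub3 : T13.invF (σ * cyc n i (jmin σ i h) h) ⊆ T13.invF ρ :=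
          T13.subset_of_weakLe hTρ
        have hii : i = i' := by
          by_contra hne
          have hpσ : (σ ⟨i' + 1, h'⟩, σ ⟨i', Nat.lt_of_succ_lt h'⟩) ∈ T13.invF σ :=
            T13.pair_mem_invF h' σ hd'
          have h1 := T13.T_pair_not_mem σ i' h' hd'
          have h2 : (σ ⟨i' + 1, h'⟩, σ ⟨i', Nat.lt_of_succ_lt h'⟩) ∉ T13.invF ρ :=
            fun hx => h1 (hsub2 hx)
          have h3 : (σ ⟨i' + 1, h'⟩, σ ⟨i', Nat.lt_of_succ_lt h'⟩) ∉
              T13.invF (σ * cyc n i (jmin σ i h) h) := fun hx => h2 (hsub3 hx)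
          rw [T13.T_mem_iff σ i h hd] at h3
          push_neg at h3
          obtain ⟨hveq, -, -⟩ := h3 hpσ
          have hfe := σ.injective hveq
          have hve := congrArg Fin.val hfe
          simp only [Fin.val_mk] at hve
          omega
        subst hii
        left
        exact T13.eq_of_invF_eq (Finset.Subset.antisymm hsub2 hsub3)
    · -- inj on
      rintro τ1 ⟨i1, g1, hd1, rfl⟩ τ2 ⟨i2, g2, hd2, rfl⟩ hpsi
      rw [T13.psi_eq σ i1 g1 hd1, T13.psi_eq σ i2 g2 hd2] at hpsi
      have hi12 : i1 = i2 := by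
        rcases lt_trichotomy i1 i2 with hlt | heq | hlt
        · exact absurd hpsi (T13.T_apply_ne σ i1 g1 i2 g2 hlt)
        · exact heq
        · exact absurd hpsi.symm (T13.T_apply_ne σ i2 g2 i1 g1 hlt)
      subst hi12
      rfl
    · -- surj on
      rintro ρ ⟨hav, hle, hne, hcov⟩
      rcases Relation.ReflTransGen.cases_head hle with heq | ⟨π, hcovπ, hle'⟩
      · exact absurd heq.symm hne
      · obtain ⟨i', h', hd', rfl⟩ := hcovπ
        have hsub1 : T13.invF ρ ⊆
            T13.invF (σ * Equiv.swap ⟨i', Nat.lt_of_succ_lt h'⟩ ⟨i' + 1, h'⟩) :=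
          T13.subset_of_weakLe hle'
        have hsub2 := T13.star σ i' h' hd' ρ hav hsub1
        have hρT : weakLe ρ (σ * cyc n i' (jmin σ i' h') h') := T13.weakLe_of_subset hsub2
        have hTσ := T13.T_le σ i' h' hd'
        rcases hcov _ (T13.T_av σ i' h' hσ hd') hρT hTσ with hTρ | hTσ'
        · exact ⟨_, ⟨i', h', hd', rfl⟩, by rw [T13.psi_eq σ i' h' hd']; exact hTρ⟩
        · exact absurd hTσ' (T13.T_ne_sigma σ i' h' hd')
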